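/- Let A be a commutative algebra and I an abstract continuity ideal. For each cardinal κ not exceeding the cardinality of the set 𝔓 of prime ideals of the form (I : a), a ∈ A, there exists a subfamily 𝒢 ⊆ 𝔓 with |𝒢| ≥ κ such that for every a ∈ ⋃{P : P ∈ 𝒢}, the set {P ∈ 𝒢 : a ∉ P} has cardinality strictly less than κ. -/
import Mathlib


/-- The quotient ideal `(J : a) = {x | a * x ∈ J}`. -/
def quotIdeal {A : Type*} [CommRing A] (J : Ideal A) (a : A) : Ideal A where
  carrier := {x | a * x ∈ J}
  zero_mem' := by simp
  add_mem' := by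
    intro x y hx hy
    simpa [mul_add] using J.add_mem hx hy
  smul_mem' := by
    intro c x hx
    simp only [smul_eq_mul, Set.mem_setOf_eq, mul_left_comm a c x] at *
    exact J.mul_mem_left c hx

theorem mem_quotIdeal {A : Type*} [CommRing A] (J : Ideal A) (a x : A) :
    x ∈ quotIdeal J a ↔ a * x ∈ J := Iff.rfl

/-- An ideal `I` is an abstract continuity ideal if for every sequence
`(a n)` the increasing chain of quotient ideals eventually stabilizes. -/
def AbstractContinuityIdeal {A : Type*} [CommRing A] (I : Ideal A) : Prop :=
  ∀ a : ℕ → A, ∃ n₀ : ℕ, ∀ n ≥ n₀,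
    quotIdeal I (∏ i ∈ Finset.range n, a i) =
      quotIdeal I (∏ i ∈ Finset.range (n + 1), a i)

/-- Dichotomy lemma: for `I` an abstract continuity ideal and any cardinal `κ`
not exceeding the cardinality of the set `𝔓` of primes of the form `(I : a)`,
there is a subfamily `𝒢 ⊆ 𝔓` with `|𝒢| ≥ κ` such that for every
`a ∈ ⋃ 𝒢`, the set `{P ∈ 𝒢 : a ∉ P}` has cardinality `< κ`. -/
theorem dichotomy_lemma {A : Type*} [CommRing A]
    (I : Ideal A) (hI : AbstractContinuityIdeal I)
    (𝔓 : Set (Ideal A)) (h𝔓 : 𝔓 = {P | (∃ a : A, P = quotIdeal I a) ∧ P.IsPrime})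
    (κ : Cardinal) (hκ : κ ≤ Cardinal.mk 𝔓) :
    ∃ 𝒢 ⊆ 𝔓, κ ≤ Cardinal.mk 𝒢 ∧
      ∀ a : A, (∃ P ∈ 𝒢, a ∈ P) →
        Cardinal.mk {P : Ideal A // P ∈ 𝒢 ∧ a ∉ P} < κ := by
  by_contra hcon
  push_neg at hcon
  have step : ∀ s : {𝒢 : Set (Ideal A) // 𝒢 ⊆ 𝔓 ∧ κ ≤ Cardinal.mk 𝒢},
      ∃ a : A, (∃ P ∈ s.1, a ∈ P) ∧
        ({P | P ∈ s.1 ∧ a ∉ P} ⊆ 𝔓 ∧ κ ≤ Cardinal.mk {P | P ∈ s.1 ∧ a ∉ P}) := by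
    rintro ⟨G, hG1, hG2⟩
    obtain ⟨a, h1, h2⟩ := hcon G hG1 hG2
    exact ⟨a, h1, fun P hP => hG1 hP.1, h2⟩
  choose f hf1 hf2 using step
  set next : {𝒢 : Set (Ideal A) // 𝒢 ⊆ 𝔓 ∧ κ ≤ Cardinal.mk 𝒢} →
      {𝒢 : Set (Ideal A) // 𝒢 ⊆ 𝔓 ∧ κ ≤ Cardinal.mk 𝒢} :=
    fun s => ⟨{P | P ∈ s.1 ∧ f s ∉ P}, hf2 s⟩ with hnext
  set g : ℕ → {𝒢 : Set (Ideal A) // 𝒢 ⊆ 𝔓 ∧ κ ≤ Cardinal.mk 𝒢} :=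
    fun n => next^[n] ⟨𝔓, subset_rfl, hκ⟩ with hg
  have hgsucc : ∀ n, g (n + 1) = next (g n) := by
    intro n
    simp [hg, Function.iterate_succ_apply']
  set a : ℕ → A := fun n => f (g n) with ha
  have hmono : ∀ n m, n ≤ m → (g m).1 ⊆ (g n).1 := by
    intro n m hnm
    induction m with
    | zero => simp_all
    | succ k ih =>
      rcases Nat.lt_or_ge n (k+1) with h | h
      · intro Q hQ
        rw [hgsucc] at hQ
        exact ih (Nat.lt_succ_iff.mp h) hQ.1
      · have : n = k + 1 := le_antisymm hnm h
        subst this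
        exact subset_rfl
  have hPex : ∀ n, ∃ P ∈ (g n).1, a n ∈ P := fun n => hf1 (g n)
  choose P hPmem hPa using hPex
  have hPnot : ∀ n i, i < n → a i ∉ P n := by
    intro n i hin
    have h1 : P n ∈ (g (i + 1)).1 := hmono (i+1) n hin (hPmem n)
    rw [hgsucc] at h1
    exact h1.2
  obtain ⟨n₀, hn₀⟩ := hI a
  have heq := hn₀ n₀ le_rfl
  have hP𝔓 : P n₀ ∈ 𝔓 := (g n₀).2.1 (hPmem n₀)
  rw [h𝔓] at hP𝔓
  obtain ⟨⟨p, hp⟩, hprime⟩ := hP𝔓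
  have h1 : p * a n₀ ∈ I := by
    have := hPa n₀
    rw [hp, mem_quotIdeal] at this
    exact this
  have hmem : p ∈ quotIdeal I (∏ i ∈ Finset.range (n₀ + 1), a i) := by
    rw [mem_quotIdeal, Finset.prod_range_succ, mul_assoc]
    exact I.mul_mem_left _ (by rwa [mul_comm] at h1)
  have hnotmem : p ∉ quotIdeal I (∏ i ∈ Finset.range n₀, a i) := by
    intro h
    rw [mem_quotIdeal] at h
    have hprod : (∏ i ∈ Finset.range n₀, a i) ∈ P n₀ := by
      rw [hp, mem_quotIdeal, mul_comm]
      exact h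
    rw [hp] at hprime
    haveI := hprime
    rw [hp] at hprod
    obtain ⟨i, hi, hai⟩ := (Ideal.IsPrime.prod_mem_iff).mp hprod
    exact hPnot n₀ i (Finset.mem_range.mp hi) (by rwa [hp])
  rw [heq] at hnotmem
  exact hnotmem hmem
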